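/- Suppose L is generic and fix x ∈ ℤ/nℤ. The assignment sending an ordered partition (I_1, …, I_m) of {1,…,k} into nonempty blocks (m ≥ 1) to the set {x, x+μ(I_1), x+μ(I_1)+μ(I_2), …, x+μ(I_1)+⋯+μ(I_{m−1})} ⊆ ℤ/nℤ, where μ(I) is the image of ∑_{i∈I} l_i in ℤ/nℤ, is a bijection from the set of all ordered set partitions of {1,…,k} onto the set of faces of Tonn^{n,k}(L) that contain x. -/

import Mathlib

/-- The maximal simplex `Δ(x;σ)` of the generalized Tonnetz `Tonn^{n,k}(L)`. -/
def tonnDelta (n k : ℕ) (L : Fin k → ℕ) (x : ZMod n) (σ : Equiv.Perm (Fin k)) :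
    Finset (ZMod n) :=
  Finset.image
    (fun j : Fin k =>
      x + ((∑ i ∈ Finset.univ.filter (· < j), L (σ i) : ℕ) : ZMod n))
    Finset.univ

/-- A nonempty subset `S ⊆ ℤ/nℤ` is a face of `Tonn^{n,k}(L)` if `S ⊆ Δ(x;σ)`
for some `x` and `σ`. -/
def IsTonnFace (n k : ℕ) (L : Fin k → ℕ) (S : Finset (ZMod n)) : Prop :=
  S.Nonempty ∧ ∃ (x : ZMod n) (σ : Equiv.Perm (Fin k)), S ⊆ tonnDelta n k L x σ

/-- `L` is generic: equal subset sums force equal subsets. -/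
def TonnGeneric (k : ℕ) (L : Fin k → ℕ) : Prop :=
  ∀ I J : Finset (Fin k), (∑ i ∈ I, L i) = (∑ j ∈ J, L j) → I = J

/-- An ordered set partition of `{1,…,k}`: a sequence `(I_1,…,I_m)` of pairwise
disjoint nonempty subsets whose union is the whole set. -/
structure OrderedSetPartition (k : ℕ) where
  parts : List (Finset (Fin k))
  nonempty : ∀ I ∈ parts, I.Nonempty
  pairwiseDisjoint : parts.Pairwise Disjoint
  cover : ∀ t : Fin k, ∃ I ∈ parts, t ∈ I

/-- The face of `Tonn^{n,k}(L)` associated with a base point `x` and an ordered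
set partition `(I_1,…,I_m)`:
`{x, x+μ(I_1), x+μ(I_1)+μ(I_2), …, x+μ(I_1)+⋯+μ(I_{m−1})}`,
where `μ(I)` is the image of `∑_{i∈I} l_i` in `ℤ/nℤ`. -/
def partitionFace (n k : ℕ) (L : Fin k → ℕ) (x : ZMod n)
    (P : OrderedSetPartition k) : Finset (ZMod n) :=
  (Finset.range P.parts.length).image
    (fun j => x + ((((P.parts.take j).map (fun I => ∑ t ∈ I, L t)).sum : ℕ) : ZMod n))

namespace TonnAux

variable {k : ℕ} (L : Fin k → ℕ)

/-- length function along a permutation, extended by 0 -/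
def gf (σ : Equiv.Perm (Fin k)) : ℕ → ℕ :=
  fun i => if h : i < k then L (σ ⟨i, h⟩) else 0

/-- partial sums -/
def ps (σ : Equiv.Perm (Fin k)) (j : ℕ) : ℕ :=
  ∑ i ∈ Finset.range j, gf L σ i

lemma ps_succ (σ : Equiv.Perm (Fin k)) (j : ℕ) :
    ps L σ (j + 1) = ps L σ j + gf L σ j := Finset.sum_range_succ _ _

lemma gf_of_lt (σ : Equiv.Perm (Fin k)) {i : ℕ} (h : i < k) :
    gf L σ i = L (σ ⟨i, h⟩) := dif_pos h

lemma filter_sum (σ : Equiv.Perm (Fin k)) (j : Fin k) :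
    ∑ i ∈ Finset.univ.filter (· < j), L (σ i) = ps L σ j.val := by
  unfold ps
  refine Finset.sum_bij' (fun (i : Fin k) _ => i.val)
    (fun i hi => (⟨i, by simp only [Finset.mem_range] at hi; omega⟩ : Fin k)) ?_ ?_ ?_ ?_ ?_
  · intro a ha
    simp only [Finset.mem_filter, Finset.mem_univ, true_and, Fin.lt_def] at ha
    simpa using ha
  · intro a ha
    simp only [Finset.mem_range] at ha
    simp only [Finset.mem_filter, Finset.mem_univ, true_and, Fin.lt_def]
    exact ha
  · intro a _; rfl
  · intro a _; rfl
  · intro a ha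
    simp only [Finset.mem_filter, Finset.mem_univ, true_and, Fin.lt_def] at ha
    rw [gf_of_lt L σ (lt_of_lt_of_le ha j.isLt.le)]

lemma tonnDelta_eq (n : ℕ) (x : ZMod n) (σ : Equiv.Perm (Fin k)) :
    tonnDelta n k L x σ =
      (Finset.range k).image (fun j => x + ((ps L σ j : ℕ) : ZMod n)) := by
  unfold tonnDelta
  ext z
  simp only [Finset.mem_image, Finset.mem_univ, true_and, Finset.mem_range]
  constructor
  · rintro ⟨j, rfl⟩; exact ⟨j.val, j.isLt, by rw [filter_sum]⟩
  · rintro ⟨j, hj, rfl⟩; exact ⟨⟨j, hj⟩, by rw [filter_sum]⟩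

lemma ps_k (σ : Equiv.Perm (Fin k)) : ps L σ k = ∑ i, L i := by
  unfold ps
  rw [← Fin.sum_univ_eq_sum_range]
  rw [show (fun i : Fin k => gf L σ i.val) = fun i : Fin k => L (σ i) from ?_]
  · exact Equiv.sum_comp σ L
  · funext i; rw [gf_of_lt L σ i.isLt]

lemma ps_mono (σ : Equiv.Perm (Fin k)) : Monotone (ps L σ) := by
  intro a b h
  exact Finset.sum_le_sum_of_subset (Finset.range_subset_range.mpr h)

lemma ps_lt_ps (hL : ∀ i, 0 < L i) (σ : Equiv.Perm (Fin k)) {a b : ℕ}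
    (hab : a < b) (hb : b ≤ k) : ps L σ a < ps L σ b := by
  have h1 : ps L σ a < ps L σ (a + 1) := by
    rw [ps_succ, gf_of_lt L σ (show a < k by omega)]
    have := hL (σ ⟨a, by omega⟩); omega
  exact lt_of_lt_of_le h1 (ps_mono L σ (by omega))

lemma ps_le_n (σ : Equiv.Perm (Fin k)) {j : ℕ} (hj : j ≤ k) :
    ps L σ j ≤ ∑ i, L i := by
  rw [← ps_k L σ]; exact ps_mono L σ hj

end TonnAux

namespace TonnAux
variable {k : ℕ} (L : Fin k → ℕ)

def rotFun (j0 : ℕ) : Fin k → Fin k := fun i =>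
  ⟨(i.val + j0) % k, Nat.mod_lt _ (lt_of_le_of_lt (Nat.zero_le _) i.isLt)⟩

lemma rot_inj (j0 : ℕ) : Function.Injective (rotFun (k := k) j0) := by
  intro a b h
  have h' : (a.val + j0) % k = (b.val + j0) % k := congrArg Fin.val h
  have h2 : a.val % k = b.val % k := Nat.ModEq.add_right_cancel' j0 h'
  rwa [Nat.mod_eq_of_lt a.isLt, Nat.mod_eq_of_lt b.isLt, ← Fin.ext_iff] at h2

noncomputable def rotPerm (j0 : ℕ) : Equiv.Perm (Fin k) :=
  Equiv.ofBijective _ (Finite.injective_iff_bijective.mp (rot_inj (k := k) j0))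

lemma rotPerm_apply (j0 : ℕ) (i : Fin k) : rotPerm j0 i = rotFun j0 i := rfl

lemma rot1 (σ : Equiv.Perm (Fin k)) (j0 : ℕ) :
    ∀ m, j0 + m ≤ k →
      ps L ((rotPerm j0).trans σ) m + ps L σ j0 = ps L σ (j0 + m) := by
  intro m
  induction m with
  | zero => intro _; simp [ps]
  | succ m ih =>
    intro h
    have e1 : gf L ((rotPerm j0).trans σ) m = gf L σ (j0 + m) := by
      rw [gf_of_lt L _ (show m < k by omega), gf_of_lt L σ (show j0 + m < k by omega)]
      congr 1
      rw [Equiv.trans_apply, rotPerm_apply]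
      congr 1
      ext
      simp only [rotFun]
      rw [Nat.mod_eq_of_lt (by omega)]
      omega
    rw [ps_succ, show j0 + (m + 1) = (j0 + m) + 1 by omega, ps_succ, e1]
    have := ih (by omega)
    omega

lemma rot2 (σ : Equiv.Perm (Fin k)) (j0 : ℕ) (hj0 : j0 ≤ k) :
    ∀ m, k - j0 ≤ m → m ≤ k →
      ps L ((rotPerm j0).trans σ) m + ps L σ j0 =
        ps L σ k + ps L σ (j0 + m - k) := by
  intro m
  induction m with
  | zero =>
    intro h1 _
    have hj : j0 = k := by omega
    subst hj
    simp [ps]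
  | succ m ih =>
    intro h1 h2
    by_cases hc : k - j0 ≤ m
    · have hrec := ih hc (by omega)
      have e1 : gf L ((rotPerm j0).trans σ) m = gf L σ (j0 + m - k) := by
        rw [gf_of_lt L _ (show m < k by omega), gf_of_lt L σ (show j0 + m - k < k by omega)]
        congr 1
        rw [Equiv.trans_apply, rotPerm_apply]
        congr 1
        ext
        simp only [rotFun]
        rw [Nat.mod_eq_sub_mod (by omega), Nat.mod_eq_of_lt (by omega)]
        omega
      rw [ps_succ, show j0 + (m + 1) - k = (j0 + m - k) + 1 by omega, ps_succ, e1]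
      omega
    · have hm1 : j0 + (m + 1) = k := by omega
      have := rot1 L σ j0 (m + 1) (by omega)
      rw [hm1] at this
      rw [show j0 + (m + 1) - k = 0 by omega]
      simpa [ps] using this

lemma rotate_subset {n : ℕ} (hsum : ∑ i, L i = n) (y : ZMod n)
    (σ : Equiv.Perm (Fin k)) (j0 : Fin k) :
    tonnDelta n k L y σ ⊆
      tonnDelta n k L (y + ((ps L σ j0.val : ℕ) : ZMod n))
        ((rotPerm j0.val).trans σ) := by
  rw [tonnDelta_eq, tonnDelta_eq]
  intro z hz
  simp only [Finset.mem_image, Finset.mem_range] at hz ⊢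
  obtain ⟨j, hj, rfl⟩ := hz
  by_cases h : j0.val ≤ j
  · refine ⟨j - j0.val, by omega, ?_⟩
    have h1 := rot1 L σ j0.val (j - j0.val) (by omega)
    rw [show j0.val + (j - j0.val) = j by omega] at h1
    have h2 := congrArg (fun t : ℕ => (t : ZMod n)) h1
    push_cast at h2
    linear_combination h2
  · have hj0k : j0.val ≤ k := j0.isLt.le
    refine ⟨j + k - j0.val, by omega, ?_⟩
    have h1 := rot2 L σ j0.val hj0k (j + k - j0.val) (by omega) (by omega)
    rw [show j0.val + (j + k - j0.val) - k = j by omega] at h1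
    have h2 := congrArg (fun t : ℕ => (t : ZMod n)) h1
    push_cast at h2
    rw [ps_k, hsum, ZMod.natCast_self] at h2
    linear_combination h2

end TonnAux

namespace TonnAux
variable {k : ℕ} (L : Fin k → ℕ)

lemma sum_take_succ_nat {α : Type*} (l : List α) (f : α → ℕ) (j : ℕ) (h : j < l.length) :
    ((l.take (j + 1)).map f).sum = ((l.take j).map f).sum + f l[j] := by
  rw [← List.take_concat_get h, List.concat_eq_append, List.map_append, List.sum_append]
  simp

lemma mem_foldr_union {l : List (Finset (Fin k))} {s : Finset (Fin k)} {t : Fin k} :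
    t ∈ l.foldr (· ∪ ·) s ↔ (∃ I ∈ l, t ∈ I) ∨ t ∈ s := by
  induction l with
  | nil => simp
  | cons I l ih => simp [ih, or_assoc]

lemma disjoint_foldr_union {l : List (Finset (Fin k))} {B : Finset (Fin k)}
    (h : ∀ I ∈ l, Disjoint I B) : Disjoint (l.foldr (· ∪ ·) ∅) B := by
  rw [Finset.disjoint_left]
  intro t ht htB
  rw [mem_foldr_union] at ht
  rcases ht with ⟨I, hI, htI⟩ | h0
  · exact (Finset.disjoint_left.mp (h I hI)) htI htB
  · simp at h0

lemma sum_blocks {l : List (Finset (Fin k))} (hd : l.Pairwise Disjoint) :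
    (l.map (fun I => ∑ t ∈ I, L t)).sum = ∑ t ∈ l.foldr (· ∪ ·) ∅, L t := by
  induction l with
  | nil => simp
  | cons I l ih =>
    rw [List.pairwise_cons] at hd
    rw [List.map_cons, List.sum_cons, List.foldr_cons, ih hd.2]
    exact (Finset.sum_union
      ((disjoint_foldr_union (fun J hJ => (hd.1 J hJ).symm)).symm)).symm

def bsum (R : OrderedSetPartition k) (j : ℕ) : ℕ :=
  ((R.parts.take j).map (fun I => ∑ t ∈ I, L t)).sum

def Uset (R : OrderedSetPartition k) (j : ℕ) : Finset (Fin k) :=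
  (R.parts.take j).foldr (· ∪ ·) ∅

lemma bsum_eq_sum_Uset (R : OrderedSetPartition k) (j : ℕ) :
    bsum L R j = ∑ t ∈ Uset R j, L t :=
  sum_blocks L (R.pairwiseDisjoint.sublist (List.take_sublist j _))

lemma Uset_univ (R : OrderedSetPartition k) :
    Uset R R.parts.length = Finset.univ := by
  ext t
  simp only [Uset, List.take_length, Finset.mem_univ, iff_true]
  rw [mem_foldr_union]
  left
  exact R.cover t

lemma bsum_len (R : OrderedSetPartition k) :
    bsum L R R.parts.length = ∑ i, L i := by
  rw [bsum_eq_sum_Uset, Uset_univ]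

lemma bsum_succ (R : OrderedSetPartition k) {j : ℕ} (h : j < R.parts.length) :
    bsum L R (j + 1) = bsum L R j + ∑ t ∈ R.parts[j], L t :=
  sum_take_succ_nat _ _ j h

lemma Uset_succ (R : OrderedSetPartition k) {j : ℕ} (h : j < R.parts.length) :
    Uset R (j + 1) = Uset R j ∪ R.parts[j] := by
  unfold Uset
  rw [← List.take_concat_get h, List.concat_eq_append, List.foldr_append]
  ext t
  simp only [mem_foldr_union, List.foldr_cons, List.foldr_nil, Finset.mem_union,
    Finset.notMem_empty, or_false, List.mem_singleton]

lemma disjoint_Uset (R : OrderedSetPartition k) {j : ℕ} (h : j < R.parts.length) :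
    Disjoint (Uset R j) R.parts[j] := by
  have hp : (R.parts.take (j + 1)).Pairwise Disjoint :=
    R.pairwiseDisjoint.sublist (List.take_sublist _ _)
  rw [← List.take_concat_get h, List.concat_eq_append, List.pairwise_append] at hp
  exact disjoint_foldr_union fun I hI => hp.2.2 I hI _ (List.mem_singleton_self _)

lemma parts_get_eq (R : OrderedSetPartition k) {j : ℕ} (h : j < R.parts.length) :
    R.parts[j] = Uset R (j + 1) \ Uset R j := by
  rw [Uset_succ _ h, Finset.union_sdiff_cancel_left (disjoint_Uset R h)]

lemma bsum_lt (hL : ∀ i, 0 < L i) (R : OrderedSetPartition k) {a b : ℕ}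
    (hab : a < b) (hb : b ≤ R.parts.length) : bsum L R a < bsum L R b := by
  induction b with
  | zero => omega
  | succ b ih =>
    have h1 : b < R.parts.length := by omega
    rw [bsum_succ L R h1]
    have h2 : 0 < ∑ t ∈ R.parts[b], L t := by
      obtain ⟨t, ht⟩ := R.nonempty _ (List.getElem_mem h1)
      exact Finset.sum_pos' (fun i _ => Nat.zero_le _) ⟨t, ht, hL t⟩
    rcases Nat.lt_or_ge a b with h | h
    · have := ih h (by omega); omega
    · have : a = b := by omega
      subst this; omega

lemma parts_ne_nil (hk : 0 < k) (R : OrderedSetPartition k) : R.parts ≠ [] := by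
  obtain ⟨I, hI, -⟩ := R.cover ⟨0, hk⟩
  exact List.ne_nil_of_mem hI

lemma partitionFace_eq (n : ℕ) (x : ZMod n) (R : OrderedSetPartition k) :
    partitionFace n k L x R =
      (Finset.range R.parts.length).image
        (fun j => x + ((bsum L R j : ℕ) : ZMod n)) := rfl

lemma mem_partitionFace_self (n : ℕ) (hk : 0 < k) (x : ZMod n)
    (R : OrderedSetPartition k) : x ∈ partitionFace n k L x R := by
  rw [partitionFace_eq]
  refine Finset.mem_image.mpr ⟨0, ?_, ?_⟩
  · rw [Finset.mem_range]
    exact List.length_pos_iff.mpr (parts_ne_nil hk R)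
  · simp [bsum]

end TonnAux

namespace TonnAux
variable {k : ℕ} (L : Fin k → ℕ)

lemma inj_aux {n : ℕ} (hn : 0 < n) (hL : ∀ i, 0 < L i) (hsum : ∑ i, L i = n)
    (hgen : ∀ I J : Finset (Fin k), (∑ i ∈ I, L i) = (∑ j ∈ J, L j) → I = J)
    (x : ZMod n) (P Q : OrderedSetPartition k)
    (hface : partitionFace n k L x P = partitionFace n k L x Q) : P = Q := by
  haveI : NeZero n := ⟨by omega⟩
  have hblt : ∀ (R : OrderedSetPartition k) (j : ℕ), j < R.parts.length →
      bsum L R j < n := by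
    intro R j hj
    have h1 := bsum_lt L hL R hj (le_refl _)
    rwa [bsum_len, hsum] at h1
  have key : ∀ (R : OrderedSetPartition k),
      (Finset.range R.parts.length).image (bsum L R) =
        (partitionFace n k L x R).image (fun z => (z - x).val) := by
    intro R
    rw [partitionFace_eq, Finset.image_image]
    apply Finset.image_congr
    intro j hj
    simp only [Finset.coe_range, Set.mem_Iio] at hj
    show bsum L R j = (x + (bsum L R j : ZMod n) - x).val
    rw [add_sub_cancel_left, ZMod.val_cast_of_lt (hblt R j hj)]
  have hinj : ∀ (R : OrderedSetPartition k),
      Set.InjOn (bsum L R) (Finset.range R.parts.length) := by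
    intro R a ha b hb hab
    simp only [Finset.coe_range, Set.mem_Iio] at ha hb
    by_contra hne
    rcases Nat.lt_or_ge a b with h | h
    · exact absurd hab (Nat.ne_of_lt (bsum_lt L hL R h (by omega)))
    · have h2 : b < a := by omega
      exact absurd hab.symm (Nat.ne_of_lt (bsum_lt L hL R h2 (by omega)))
  have hT : (Finset.range P.parts.length).image (bsum L P) =
      (Finset.range Q.parts.length).image (bsum L Q) := by
    rw [key P, key Q, hface]
  have hm : P.parts.length = Q.parts.length := by
    have c1 := Finset.card_image_of_injOn (hinj P)
    have c2 := Finset.card_image_of_injOn (hinj Q)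
    rw [hT] at c1
    rw [c2, Finset.card_range] at c1
    rw [Finset.card_range] at c1
    exact c1.symm
  set T := (Finset.range P.parts.length).image (bsum L P) with hTdef
  have hcard : T.card = P.parts.length := by
    rw [hTdef, Finset.card_image_of_injOn (hinj P), Finset.card_range]
  have hfP : ∀ j : Fin P.parts.length, bsum L P j.val ∈ T :=
    fun j => Finset.mem_image_of_mem _ (Finset.mem_range.mpr j.isLt)
  have hfQ : ∀ j : Fin P.parts.length, bsum L Q j.val ∈ T := by
    intro j
    rw [hT]
    exact Finset.mem_image_of_mem _ (Finset.mem_range.mpr (hm ▸ j.isLt))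
  have hsP : StrictMono (fun j : Fin P.parts.length => bsum L P j.val) :=
    fun a b hab => bsum_lt L hL P hab b.isLt.le
  have hsQ : StrictMono (fun j : Fin P.parts.length => bsum L Q j.val) :=
    fun a b hab => bsum_lt L hL Q hab (le_of_lt (hm ▸ b.isLt))
  have e1 := Finset.orderEmbOfFin_unique hcard hfP hsP
  have e2 := Finset.orderEmbOfFin_unique hcard hfQ hsQ
  have hbs : ∀ j, j ≤ P.parts.length → bsum L P j = bsum L Q j := by
    intro j hj
    rcases Nat.lt_or_ge j P.parts.length with h | h
    · have := congrFun (e1.trans e2.symm) ⟨j, h⟩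
      simpa using this
    · have hj' : j = P.parts.length := by omega
      subst hj'
      rw [bsum_len, hm, bsum_len]
  have hU : ∀ j, j ≤ P.parts.length → Uset P j = Uset Q j := by
    intro j hj
    apply hgen
    rw [← bsum_eq_sum_Uset, ← bsum_eq_sum_Uset, hbs j hj]
  have hparts : P.parts = Q.parts := by
    apply List.ext_getElem hm
    intro j h1 h2
    rw [parts_get_eq P h1, parts_get_eq Q h2, hU j h1.le, hU (j + 1) h1]
  cases P; cases Q
  simp only at hparts
  subst hparts
  rfl

end TonnAux

namespace TonnAux
variable {k : ℕ} (L : Fin k → ℕ)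

lemma length_flatMap' {α β : Type*} (l : List α) (f : α → List β) :
    (l.flatMap f).length = (l.map (fun a => (f a).length)).sum := by
  induction l with
  | nil => simp
  | cons a l ih => simp [ih]

lemma sum_flatMap' {α : Type*} (l : List α) (f : α → List ℕ) :
    (l.flatMap f).sum = (l.map (fun a => (f a).sum)).sum := by
  induction l with
  | nil => simp
  | cons a l ih => simp [ih]

lemma sum_sort_map (I : Finset (Fin k)) :
    ((I.sort (· ≤ ·)).map L).sum = ∑ t ∈ I, L t := by
  rw [← Finset.sum_map_toList]
  exact List.Perm.sum_eq (List.Perm.map L (Finset.sort_perm_toList I _))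

lemma sum_take_eq (l : List ℕ) : ∀ j, j ≤ l.length →
    (l.take j).sum = ∑ i ∈ Finset.range j, l.getD i 0 := by
  intro j
  induction j with
  | zero => simp
  | succ j ih =>
    intro h
    have hj : j < l.length := by omega
    rw [← List.take_concat_get hj, List.concat_eq_append, List.sum_append,
      Finset.sum_range_succ, ih (by omega)]
    simp [List.getD, List.getElem?_eq_getElem hj]

lemma maps_aux {n : ℕ} (hk : 0 < k) (x : ZMod n) (R : OrderedSetPartition k) :
    ∃ σ : Equiv.Perm (Fin k), partitionFace n k L x R ⊆ tonnDelta n k L x σ := by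
  classical
  set c : List (Fin k) := R.parts.flatMap (fun I => I.sort (· ≤ ·)) with hc
  have hmemc : ∀ t : Fin k, t ∈ c := by
    intro t
    obtain ⟨I, hI, htI⟩ := R.cover t
    exact List.mem_flatMap.mpr ⟨I, hI, (Finset.mem_sort _).mpr htI⟩
  have hnd : c.Nodup := by
    rw [List.nodup_flatMap]
    constructor
    · intro I _; exact Finset.sort_nodup I _
    · refine R.pairwiseDisjoint.imp ?_
      intro I J hIJ
      intro t ht ht'
      exact Finset.disjoint_left.mp hIJ ((Finset.mem_sort _).mp ht)
        ((Finset.mem_sort _).mp ht')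
  have hlen : c.length = k := by
    have h1 : c.toFinset = Finset.univ := by
      ext t; simp [hmemc t]
    have h2 := List.toFinset_card_of_nodup hnd
    rw [h1] at h2
    simp at h2
    omega
  have hinj : Function.Injective (fun i : Fin k => c.get (Fin.cast hlen.symm i)) := by
    intro a b hab
    have := (List.nodup_iff_injective_get).mp hnd hab
    exact Fin.cast_injective _ this
  set σ : Equiv.Perm (Fin k) :=
    Equiv.ofBijective _ (Finite.injective_iff_bijective.mp hinj) with hσ
  have hσap : ∀ (i : ℕ) (hi : i < k), σ ⟨i, hi⟩ = c.get ⟨i, by omega⟩ := by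
    intro i hi
    rfl
  refine ⟨σ, ?_⟩
  -- index function
  set C : ℕ → ℕ := fun j => ((R.parts.take j).map Finset.card).sum with hC
  have hdecomp : ∀ j, c = (R.parts.take j).flatMap (fun I => I.sort (· ≤ ·)) ++
      (R.parts.drop j).flatMap (fun I => I.sort (· ≤ ·)) := by
    intro j
    rw [hc]
    conv_lhs => rw [← List.take_append_drop j R.parts]
    rw [List.flatMap_append]
  have hlenpre : ∀ j, ((R.parts.take j).flatMap (fun I => I.sort (· ≤ ·))).length = C j := by
    intro j
    rw [length_flatMap']
    congr 1
    apply List.map_congr_left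
    intro I _
    exact Finset.length_sort _
  have hCle : ∀ j, C j ≤ k := by
    intro j
    have := congrArg List.length (hdecomp j)
    rw [List.length_append, hlenpre j, hlen] at this
    omega
  have hClt : ∀ j < R.parts.length, C j < k := by
    intro j hj
    have hdrop : R.parts.drop j = R.parts[j] :: R.parts.drop (j + 1) :=
      List.drop_eq_getElem_cons hj
    obtain ⟨t, ht⟩ := R.nonempty _ (List.getElem_mem hj)
    have htmem : t ∈ (R.parts.drop j).flatMap (fun I => I.sort (· ≤ ·)) := by
      rw [hdrop]
      exact List.mem_flatMap.mpr ⟨R.parts[j], List.mem_cons_self,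
        (Finset.mem_sort _).mpr ht⟩
    have hne : ((R.parts.drop j).flatMap (fun I => I.sort (· ≤ ·))).length ≠ 0 := by
      intro h0
      rw [List.length_eq_zero_iff] at h0
      rw [h0] at htmem
      exact absurd htmem List.not_mem_nil
    have := congrArg List.length (hdecomp j)
    rw [List.length_append, hlenpre j, hlen] at this
    omega
  have hgfc : ∀ (i : ℕ), i < k → gf L σ i = (c.map L).getD i 0 := by
    intro i hi
    rw [gf_of_lt L σ hi, hσap i hi]
    have hi' : i < (c.map L).length := by rw [List.length_map]; omega
    rw [List.getD_eq_getElem _ 0 hi', List.getElem_map]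
    simp [List.get_eq_getElem]
  have hps : ∀ j, bsum L R j = ps L σ (C j) := by
    intro j
    have h1 : ps L σ (C j) = ((c.map L).take (C j)).sum := by
      rw [ps, sum_take_eq (c.map L) (C j) (by rw [List.length_map, hlen]; exact hCle j)]
      apply Finset.sum_congr rfl
      intro i hi
      rw [Finset.mem_range] at hi
      exact (hgfc i (lt_of_lt_of_le hi (hCle j)))
    rw [h1]
    have h2 : (c.map L).take (C j) =
        ((R.parts.take j).flatMap (fun I => I.sort (· ≤ ·))).map L := by
      conv_lhs => rw [hdecomp j]
      rw [List.map_append]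
      apply List.take_left'
      rw [List.length_map, hlenpre j]
    rw [h2, List.map_flatMap, sum_flatMap']
    unfold bsum
    refine congrArg List.sum (List.map_congr_left ?_)
    intro I _
    exact (sum_sort_map L I).symm
  rw [partitionFace_eq, tonnDelta_eq]
  intro z hz
  rw [Finset.mem_image] at hz ⊢
  obtain ⟨j, hj, rfl⟩ := hz
  rw [Finset.mem_range] at hj
  exact ⟨C j, Finset.mem_range.mpr (hClt j hj), by rw [hps j]⟩

end TonnAux

namespace TonnAux
variable {k : ℕ} (L : Fin k → ℕ)

lemma find_interval (A : ℕ → ℕ) : ∀ (m v : ℕ), A 0 ≤ v → v < A m →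
    ∃ t, t < m ∧ A t ≤ v ∧ v < A (t + 1) := by
  intro m
  induction m with
  | zero => intro v h1 h2; omega
  | succ m ih =>
    intro v h1 h2
    by_cases h : A m ≤ v
    · exact ⟨m, by omega, h, h2⟩
    · obtain ⟨t, ht, h3, h4⟩ := ih v h1 (by omega)
      exact ⟨t, by omega, h3, h4⟩

lemma surj_aux {n : ℕ} (hn : 0 < n) (hk : 0 < k) (hL : ∀ i, 0 < L i)
    (hsum : ∑ i, L i = n) (x : ZMod n) (S : Finset (ZMod n))
    (y : ZMod n) (σ0 : Equiv.Perm (Fin k)) (hS : S ⊆ tonnDelta n k L y σ0)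
    (hx : x ∈ S) :
    ∃ R : OrderedSetPartition k, partitionFace n k L x R = S := by
  classical
  haveI : NeZero n := ⟨by omega⟩
  rw [tonnDelta_eq] at hS
  obtain ⟨j0, hj0', hxeq⟩ := Finset.mem_image.mp (hS hx)
  rw [Finset.mem_range] at hj0'
  set τ : Equiv.Perm (Fin k) := (rotPerm j0).trans σ0 with hτ
  have hSτ : S ⊆ tonnDelta n k L x τ := by
    intro z hz
    have h1 := rotate_subset L hsum y σ0 ⟨j0, hj0'⟩
      (show z ∈ tonnDelta n k L y σ0 by rw [tonnDelta_eq]; exact hS hz)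
    rwa [show ((⟨j0, hj0'⟩ : Fin k) : ℕ) = j0 from rfl, hxeq] at h1
  rw [tonnDelta_eq] at hSτ
  set J : Finset ℕ :=
    (Finset.range k).filter (fun j => x + ((ps L τ j : ℕ) : ZMod n) ∈ S) with hJ
  have h0J : (0 : ℕ) ∈ J := by
    rw [hJ, Finset.mem_filter, Finset.mem_range]
    refine ⟨hk, ?_⟩
    simpa [ps] using hx
  have hSJ : S = J.image (fun j => x + ((ps L τ j : ℕ) : ZMod n)) := by
    apply Finset.Subset.antisymm
    · intro z hz
      obtain ⟨j, hj, hje⟩ := Finset.mem_image.mp (hSτ hz)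
      rw [Finset.mem_range] at hj
      exact Finset.mem_image.mpr ⟨j,
        Finset.mem_filter.mpr ⟨Finset.mem_range.mpr hj, by rw [hje]; exact hz⟩, hje⟩
    · intro z hz
      obtain ⟨j, hj, hje⟩ := Finset.mem_image.mp hz
      rw [hJ, Finset.mem_filter] at hj
      rw [← hje]; exact hj.2
  set a : List ℕ := J.sort (· ≤ ·) with ha
  set m := a.length with hm
  have hsorted : List.Pairwise (· < ·) a := (Finset.sortedLT_sort J).pairwise
  have hmema : ∀ v, v ∈ a ↔ v ∈ J := fun v => Finset.mem_sort _
  have hm0 : 0 < m := List.length_pos_of_mem ((hmema 0).mpr h0J)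
  set A : ℕ → ℕ := fun j => if h : j < m then a.get ⟨j, h⟩ else k with hA
  have hgetlt : ∀ (i j : ℕ) (hi : i < m) (hj : j < m), i < j →
      a.get ⟨i, hi⟩ < a.get ⟨j, hj⟩ := by
    have hp := List.pairwise_iff_getElem.mp hsorted
    intro i j hi hj hij
    simpa [List.get_eq_getElem] using hp i j hi hj hij
  have hmemA : ∀ j, j < m → A j ∈ J := by
    intro j hj
    rw [hA]
    simp only [dif_pos hj]
    exact (hmema _).mp (List.get_mem a ⟨j, hj⟩)
  have hAltk : ∀ j, j < m → A j < k := by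
    intro j hj
    have := hmemA j hj
    rw [hJ, Finset.mem_filter, Finset.mem_range] at this
    exact this.1
  have hA0 : A 0 = 0 := by
    obtain ⟨i, hi, hgeti⟩ := List.mem_iff_getElem.mp ((hmema 0).mpr h0J)
    rcases Nat.eq_zero_or_pos i with h | h
    · subst h
      rw [hA]; simp only [dif_pos hm0]
      rw [List.get_eq_getElem]; exact hgeti
    · exfalso
      have h2 : a[0]'hm0 < a[i]'hi := by simpa using hgetlt 0 i hm0 hi h
      omega
  have hAm : A m = k := by rw [hA]; simp
  have hAstep : ∀ j, j < m → A j < A (j + 1) := by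
    intro j hj
    rcases Nat.lt_or_ge (j + 1) m with h | h
    · have := hgetlt j (j + 1) hj h (by omega)
      rw [hA]; simp only [dif_pos hj, dif_pos h]; exact this
    · have h2 : A (j + 1) = k := by rw [hA]; simp only [dif_neg (by omega : ¬ j + 1 < m)]
      rw [h2]; exact hAltk j hj
  have hAmono : ∀ q, q ≤ m → ∀ p, p ≤ q → A p ≤ A q := by
    intro q
    induction q with
    | zero =>
      intro _ p hp
      have hp0 : p = 0 := by omega
      subst hp0
      exact le_refl _
    | succ q ih =>
      intro hq p hp
      rcases Nat.lt_or_ge p (q + 1) with h | h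
      · exact le_trans (ih (by omega) p (by omega)) (hAstep q (by omega)).le
      · have : p = q + 1 := by omega
        subst this; exact le_refl _
  set Ith : ℕ → Finset (Fin k) := fun t =>
    Finset.univ.filter (fun s => A t ≤ (τ.symm s).val ∧ (τ.symm s).val < A (t + 1))
    with hIth
  have hIthmem : ∀ (t : ℕ) (s : Fin k),
      s ∈ Ith t ↔ A t ≤ (τ.symm s).val ∧ (τ.symm s).val < A (t + 1) := by
    intro t s; rw [hIth]; simp
  set parts := List.ofFn (fun t : Fin m => Ith t) with hparts
  have hne : ∀ I ∈ parts, I.Nonempty := by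
    intro I hI
    obtain ⟨t, rfl⟩ := List.mem_ofFn.mp hI
    refine ⟨τ ⟨A t, hAltk t t.isLt⟩, ?_⟩
    rw [hIthmem, Equiv.symm_apply_apply]
    exact ⟨le_refl _, hAstep t t.isLt⟩
  have hpd : parts.Pairwise Disjoint := by
    rw [hparts, List.pairwise_ofFn]
    intro i j hij
    rw [Finset.disjoint_left]
    intro s hsi hsj
    rw [hIthmem] at hsi hsj
    have h1 : A (i.val + 1) ≤ A j.val :=
      hAmono j.val j.isLt.le (i.val + 1) (by omega)
    omega
  have hcov : ∀ s : Fin k, ∃ I ∈ parts, s ∈ I := by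
    intro s
    have hv : (τ.symm s).val < A m := by rw [hAm]; exact (τ.symm s).isLt
    obtain ⟨t, htm, h1, h2⟩ := find_interval A m (τ.symm s).val (by rw [hA0]; omega) hv
    exact ⟨Ith t, List.mem_ofFn.mpr ⟨⟨t, htm⟩, rfl⟩, (hIthmem _ _).mpr ⟨h1, h2⟩⟩
  refine ⟨⟨parts, hne, hpd, hcov⟩, ?_⟩
  set R : OrderedSetPartition k := ⟨parts, hne, hpd, hcov⟩ with hR
  have hlen2 : R.parts.length = m := by
    show parts.length = m
    rw [hparts]
    exact List.length_ofFn
  have hgetIth : ∀ (j : ℕ) (hj : j < R.parts.length), R.parts[j] = Ith j := by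
    intro j hj
    have hj2 : j < m := by rw [← hlen2]; exact hj
    have hj' : j < (List.ofFn fun t : Fin m => Ith ↑t).length := by
      rw [List.length_ofFn]; exact hj2
    show (List.ofFn fun t : Fin m => Ith ↑t)[j]'hj' = Ith j
    rw [List.getElem_ofFn]
  have hblock : ∀ t, t < m →
      ∑ s ∈ Ith t, L s = ∑ i ∈ Finset.Ico (A t) (A (t + 1)), gf L τ i := by
    intro t ht
    have hub : A (t + 1) ≤ k := by
      have := hAmono m (le_refl m) (t + 1) (by omega)
      rwa [hAm] at this
    refine Finset.sum_bij' (fun s _ => (τ.symm s).val)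
      (fun i hi => τ ⟨i, by rw [Finset.mem_Ico] at hi; omega⟩) ?_ ?_ ?_ ?_ ?_
    · intro s hs
      rw [hIthmem] at hs
      rw [Finset.mem_Ico]
      exact hs
    · intro i hi
      rw [hIthmem, Equiv.symm_apply_apply]
      rw [Finset.mem_Ico] at hi
      exact hi
    · intro s _
      simp [Fin.eta, Equiv.apply_symm_apply]
    · intro i _
      simp [Equiv.symm_apply_apply]
    · intro s hs
      have h' : (τ.symm s).val < k := (τ.symm s).isLt
      rw [gf_of_lt L τ h', Fin.eta, Equiv.apply_symm_apply]
  have hbs : ∀ j, j ≤ m → bsum L R j = ps L τ (A j) := by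
    intro j
    induction j with
    | zero =>
      intro _
      rw [hA0]
      simp [bsum, ps]
    | succ j ih =>
      intro h
      have hj : j < m := by omega
      rw [bsum_succ L R (by omega : j < R.parts.length), ih (by omega),
        hgetIth j (by omega), hblock j hj, ps, ps, Finset.range_eq_Ico, Finset.range_eq_Ico]
      exact Finset.sum_Ico_consecutive _ (Nat.zero_le _) (hAstep j hj).le
  have himg : (Finset.range m).image A = J := by
    ext v
    simp only [Finset.mem_image, Finset.mem_range]
    constructor
    · rintro ⟨j, hj, rfl⟩; exact hmemA j hj
    · intro hv
      obtain ⟨i, hi, hgeti⟩ := List.mem_iff_getElem.mp ((hmema v).mpr hv)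
      refine ⟨i, hi, ?_⟩
      rw [hA]
      simp only [dif_pos hi]
      rw [dif_pos (show i < m from hi), List.get_eq_getElem]
      exact hgeti
  rw [partitionFace_eq, hlen2]
  have e1 : (Finset.range m).image (fun j => x + ((bsum L R j : ℕ) : ZMod n)) =
      (Finset.range m).image (fun j => x + ((ps L τ (A j) : ℕ) : ZMod n)) := by
    apply Finset.image_congr
    intro j hj
    simp only [Finset.coe_range, Set.mem_Iio] at hj
    simp only [hbs j hj.le]
  rw [e1, show (fun j => x + ((ps L τ (A j) : ℕ) : ZMod n)) =
      (fun v => x + ((ps L τ v : ℕ) : ZMod n)) ∘ A from rfl,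
    ← Finset.image_image, himg, ← hSJ]

end TonnAux

theorem stmt_8 (n k : ℕ) (hn : 1 ≤ n) (hk : 1 ≤ k)
    (L : Fin k → ℕ) (hL : ∀ i, 0 < L i) (hsum : ∑ i, L i = n)
    (hgen : TonnGeneric k L) (x : ZMod n) :
    Set.BijOn (partitionFace n k L x) Set.univ
      {S : Finset (ZMod n) | IsTonnFace n k L S ∧ x ∈ S} := by
  refine ⟨?_, ?_, ?_⟩
  · intro P _
    have hmem := TonnAux.mem_partitionFace_self L n hk x P
    obtain ⟨σ, hσ⟩ := TonnAux.maps_aux L hk x P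
    exact ⟨⟨⟨x, hmem⟩, x, σ, hσ⟩, hmem⟩
  · intro P _ Q _ h
    exact TonnAux.inj_aux L hn hL hsum hgen x P Q h
  · intro S hS
    obtain ⟨⟨hne, y, σ0, hsub⟩, hxS⟩ := hS
    obtain ⟨R, hR⟩ := TonnAux.surj_aux L hn hk hL hsum x S y σ0 hsub hxS
    exact ⟨R, Set.mem_univ R, hR⟩
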